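/- Let k be a positive integer, d | k, (m,k) = (f,k) = 1, and let χ⁰ be the principal character mod k. Define G(d,f,m,χ⁰) = ∑_{n=1,(n,k)=1, n≡f (mod d)}^{k} e(mn/k). If gcd(d, k/d) > 1 then G(d,f,m,χ⁰) = 0. If gcd(d, k/d) = 1 then G(d,f,m,χ⁰) = μ(k/d)·e(fmt/d), where t is the inverse of k/d modulo d. -/

import Mathlib

open Complex Real

set_option linter.unusedVariables false
set_option linter.unnecessarySeqFocus false
set_option linter.unusedTactic false

noncomputable def Efun (N : ℕ) (a : ℤ) : ℂ := Complex.exp (2 * Real.pi * Complex.I * (a / N))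

lemma Efun_add (N : ℕ) (a b : ℤ) : Efun N (a + b) = Efun N a * Efun N b := by
  unfold Efun
  rw [← Complex.exp_add]
  congr 1
  push_cast
  ring

lemma Efun_zero (N : ℕ) : Efun N 0 = 1 := by simp [Efun]

lemma Efun_nat_mul (N : ℕ) (c : ℤ) : Efun N (N * c) = 1 := by
  unfold Efun
  rcases Nat.eq_zero_or_pos N with h | h
  · simp [h]
  · have hN : (N : ℂ) ≠ 0 := by exact_mod_cast h.ne'
    have h1 : ((N * c : ℤ) : ℂ) / N = c := by push_cast; field_simp
    rw [h1]
    have h2 := Complex.exp_int_mul_two_pi_mul_I c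
    rw [← h2]; congr 1; ring

lemma Efun_congr (N : ℕ) {a b : ℤ} (h : a ≡ b [ZMOD (N:ℤ)]) : Efun N a = Efun N b := by
  obtain ⟨c, hc⟩ := h.dvd
  have hb : b = a + N * c := by linarith
  rw [hb, Efun_add, Efun_nat_mul, mul_one]

lemma Efun_div (N L : ℕ) (hL : L ∣ N) (hN : N ≠ 0) (a : ℤ) :
    Efun N ((N / L : ℕ) * a) = Efun L a := by
  obtain ⟨c, rfl⟩ := hL
  have hL0 : L ≠ 0 := by rintro rfl; simp at hN
  have hc0 : c ≠ 0 := by rintro rfl; simp at hN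
  have hLc : (L : ℂ) ≠ 0 := by exact_mod_cast hL0
  have hcc : (c : ℂ) ≠ 0 := by exact_mod_cast hc0
  unfold Efun
  congr 1
  rw [Nat.mul_div_cancel_left _ (Nat.pos_of_ne_zero hL0)]
  push_cast
  field_simp

lemma Efun_pow (N : ℕ) (c : ℤ) (j : ℕ) : Efun N (c * j) = (Efun N c) ^ j := by
  unfold Efun
  rw [← Complex.exp_nat_mul]
  congr 1
  push_cast
  ring

lemma Efun_geom_range (N : ℕ) (hN : 0 < N) (c : ℤ) :
    ∑ s ∈ Finset.range N, Efun N (c * s) = if (N:ℤ) ∣ c then (N:ℂ) else 0 := by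
  split_ifs with h
  · obtain ⟨c', rfl⟩ := h
    have h1 : ∀ s ∈ Finset.range N, Efun N ((N:ℤ) * c' * s) = 1 := by
      intro s _
      have : (N:ℤ) * c' * s = (N:ℤ) * (c' * s) := by ring
      rw [this, Efun_nat_mul]
    rw [Finset.sum_congr rfl h1, Finset.sum_const, Finset.card_range]
    simp
  · have hζ1 : Efun N c ≠ 1 := by
      intro hc
      unfold Efun at hc
      rw [Complex.exp_eq_one_iff] at hc
      obtain ⟨n, hn⟩ := hc
      have h2 : (2 * (Real.pi:ℂ) * Complex.I) ≠ 0 := by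
        simp [Real.pi_ne_zero, Complex.I_ne_zero]
      have hNc : (N : ℂ) ≠ 0 := by exact_mod_cast hN.ne'
      have h3 : (c : ℂ) = n * N := by
        have h4 : 2 * (Real.pi:ℂ) * Complex.I * ((c:ℂ)/N) = 2 * (Real.pi:ℂ) * Complex.I * n := by
          rw [hn]; ring
        have h5 : (c:ℂ)/N = n := mul_left_cancel₀ h2 h4
        field_simp at h5
        exact h5.trans (mul_comm _ _)
      have h6 : c = n * N := by exact_mod_cast h3
      exact h ⟨n, by linarith⟩
    have hpow : ∀ s ∈ Finset.range N, Efun N (c * s) = (Efun N c) ^ s := fun s _ => Efun_pow N c s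
    rw [Finset.sum_congr rfl hpow, geom_sum_eq hζ1]
    have hNpow : Efun N c ^ N = 1 := by
      rw [← Efun_pow]
      have : c * (N:ℤ) = (N:ℤ) * c := by ring
      rw [this, Efun_nat_mul]
    rw [hNpow]
    simp

lemma sum_dvd_reindex (k e : ℕ) (he : e ∣ k) (he0 : 0 < e) (F : ℕ → ℂ) :
    (∑ n ∈ Finset.Icc 1 k, if e ∣ n then F n else 0)
      = ∑ j ∈ Finset.Icc 1 (k / e), F (e * j) := by
  classical
  rw [← Finset.sum_filter]
  apply Finset.sum_nbij' (i := fun n => n / e) (j := fun j => e * j)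
  · intro n hn
    simp only [Finset.mem_filter, Finset.mem_Icc] at hn ⊢
    obtain ⟨⟨h1, h2⟩, h3⟩ := hn
    constructor
    · exact Nat.one_le_div_iff he0 |>.mpr (Nat.le_of_dvd h1 h3)
    · exact Nat.div_le_div_right h2
  · intro j hj
    simp only [Finset.mem_filter, Finset.mem_Icc] at hj ⊢
    obtain ⟨h1, h2⟩ := hj
    refine ⟨⟨Nat.one_le_iff_ne_zero.mpr (by positivity), ?_⟩, Dvd.intro _ rfl⟩
    calc e * j ≤ e * (k / e) := Nat.mul_le_mul_left e h2
      _ = k := Nat.mul_div_cancel' he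
  · intro n hn
    simp only [Finset.mem_filter, Finset.mem_Icc] at hn
    exact Nat.mul_div_cancel' hn.2
  · intro j hj
    exact Nat.mul_div_cancel_left j he0
  · intro n hn
    simp only [Finset.mem_filter, Finset.mem_Icc] at hn
    rw [Nat.mul_div_cancel' hn.2]

lemma sum_mod_reindex (M d : ℕ) (hd0 : 0 < d) (hdM : d ∣ M) (hM0 : 0 < M) (r : ℕ)
    (hr1 : 1 ≤ r) (hr2 : r ≤ d) (F : ℕ → ℂ) :
    (∑ j ∈ Finset.Icc 1 M, if (j:ℤ) ≡ (r:ℤ) [ZMOD (d:ℤ)] then F j else 0)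
      = ∑ s ∈ Finset.range (M / d), F (r + d * s) := by
  classical
  rw [← Finset.sum_filter]
  have key : ∀ j ∈ Finset.Icc 1 M, (j:ℤ) ≡ (r:ℤ) [ZMOD (d:ℤ)] → r ≤ j ∧ d ∣ (j - r) := by
    intro j hj hmod
    simp only [Finset.mem_Icc] at hj
    have hdvd : (d:ℤ) ∣ (j:ℤ) - (r:ℤ) := (Int.ModEq.dvd hmod.symm)
    have hrj : r ≤ j := by
      by_contra hlt
      push_neg at hlt
      have h1 : (0:ℤ) < (r:ℤ) - (j:ℤ) := by omega
      have h2 : (d:ℤ) ∣ (r:ℤ) - (j:ℤ) := by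
        have := dvd_neg.mpr hdvd
        rwa [neg_sub] at this
      have h3 := Int.le_of_dvd h1 h2
      omega
    refine ⟨hrj, ?_⟩
    have hc : ((j - r : ℕ) : ℤ) = (j:ℤ) - (r:ℤ) := by omega
    have h4 : (d:ℤ) ∣ ((j - r : ℕ) : ℤ) := by rw [hc]; exact hdvd
    exact_mod_cast h4
  apply Finset.sum_nbij' (i := fun j => (j - r) / d) (j := fun s => r + d * s)
  · intro j hj
    simp only [Finset.mem_filter] at hj
    obtain ⟨hrj, hdvd⟩ := key j hj.1 hj.2
    simp only [Finset.mem_Icc] at hj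
    simp only [Finset.mem_range]
    obtain ⟨a, ha⟩ := hdvd
    have hja : j - r = d * a := ha
    have hlt : d * a < M := by omega
    have : a < M / d := by
      obtain ⟨b, rfl⟩ := hdM
      have : a < b := by
        by_contra hab
        push_neg at hab
        have := Nat.mul_le_mul_left d hab
        omega
      rwa [Nat.mul_div_cancel_left _ hd0]
    rw [hja, Nat.mul_div_cancel_left _ hd0]
    exact this
  · intro s hs
    simp only [Finset.mem_range] at hs
    simp only [Finset.mem_filter, Finset.mem_Icc]
    have hds : d * s + d ≤ M := by
      have h1 : s + 1 ≤ M / d := hs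
      have h2 : d * (s + 1) ≤ d * (M / d) := Nat.mul_le_mul_left d h1
      rw [Nat.mul_div_cancel' hdM, Nat.mul_succ] at h2
      exact h2
    refine ⟨⟨by omega, by omega⟩, ?_⟩
    have : (d:ℤ) ∣ ((r:ℤ) - ((r + d * s : ℕ) : ℤ)) := ⟨-s, by push_cast; ring⟩
    exact Int.modEq_iff_dvd.mpr this
  · intro j hj
    simp only [Finset.mem_filter] at hj
    obtain ⟨hrj, hdvd⟩ := key j hj.1 hj.2
    rw [Nat.mul_div_cancel' hdvd]
    omega
  · intro s hs
    rw [Nat.add_sub_cancel_left, Nat.mul_div_cancel_left _ hd0]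
  · intro j hj
    simp only [Finset.mem_filter] at hj
    obtain ⟨hrj, hdvd⟩ := key j hj.1 hj.2
    rw [Nat.mul_div_cancel' hdvd]
    congr 1
    omega

lemma moebius_indicator (n k : ℕ) (hn : 0 < n) (hk : 0 < k) :
    (if Nat.gcd n k = 1 then (1:ℂ) else 0)
      = ∑ e ∈ k.divisors, if e ∣ n then ((ArithmeticFunction.moebius e : ℤ) : ℂ) else 0 := by
  classical
  have h1 : k.divisors.filter (· ∣ n) = (Nat.gcd n k).divisors := by
    ext e
    simp only [Finset.mem_filter, Nat.mem_divisors, Nat.dvd_gcd_iff]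
    constructor
    · rintro ⟨⟨h2, h3⟩, h4⟩
      exact ⟨⟨h4, h2⟩, Nat.gcd_ne_zero_left hn.ne'⟩
    · rintro ⟨⟨h2, h3⟩, h4⟩
      exact ⟨⟨h3, hk.ne'⟩, h2⟩
  have h2 : ∑ e ∈ (Nat.gcd n k).divisors, ArithmeticFunction.moebius e
      = if Nat.gcd n k = 1 then 1 else 0 := by
    rw [← ArithmeticFunction.coe_mul_zeta_apply, ArithmeticFunction.moebius_mul_coe_zeta,
      ArithmeticFunction.one_apply]
  rw [← Finset.sum_filter, h1]
  calc (if Nat.gcd n k = 1 then (1:ℂ) else 0)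
      = (((if Nat.gcd n k = 1 then 1 else 0 : ℤ)) : ℂ) := by split_ifs <;> simp
    _ = ((∑ e ∈ (Nat.gcd n k).divisors, ArithmeticFunction.moebius e : ℤ) : ℂ) := by rw [h2]
    _ = _ := by push_cast; rfl

lemma exists_inverse (e d : ℕ) (hco : Nat.Coprime e d) :
    ∃ u : ℤ, u * e ≡ 1 [ZMOD (d:ℤ)] := by
  have h : IsCoprime (e:ℤ) (d:ℤ) := by
    rw [Int.isCoprime_iff_gcd_eq_one]
    exact_mod_cast hco
  obtain ⟨a, b, hab⟩ := h
  refine ⟨a, ?_⟩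
  have : (d:ℤ) ∣ 1 - a * e := ⟨b, by linarith⟩
  exact Int.modEq_iff_dvd.mpr (by simpa using this)

lemma not_dvd_of_coprime (m : ℤ) (k N : ℕ) (hm : IsCoprime m (k:ℤ)) (hN : N ∣ k) (hN1 : N ≠ 1) :
    ¬ (N:ℤ) ∣ m := by
  intro h
  have h2 : (N:ℤ) ∣ (k:ℤ) := by exact_mod_cast hN
  have h3 : IsUnit ((N:ℤ)) := hm.isUnit_of_dvd' h h2
  rw [Int.isUnit_iff] at h3
  rcases h3 with h3 | h3 <;> [skip; omega] <;> exact hN1 (by exact_mod_cast h3)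

lemma gcond_false (k d e : ℕ) (f : ℤ) (hf : IsCoprime f (k:ℤ)) (hek : e ∣ k) (hk : 0 < k)
    (hnc : ¬ Nat.Coprime e d) (x : ℤ) : ¬ ((e:ℤ) * x ≡ f [ZMOD (d:ℤ)]) := by
  intro h
  set g := Nat.gcd e d with hg
  have hg1 : g ≠ 1 := hnc
  have hge : (g:ℤ) ∣ (e:ℤ) := by exact_mod_cast Nat.gcd_dvd_left e d
  have hgd : (g:ℤ) ∣ (d:ℤ) := by exact_mod_cast Nat.gcd_dvd_right e d
  have hdvd : (d:ℤ) ∣ f - (e:ℤ) * x := Int.ModEq.dvd h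
  have hgf : (g:ℤ) ∣ f := by
    have h1 : (g:ℤ) ∣ f - (e:ℤ) * x := hgd.trans hdvd
    have h2 : (g:ℤ) ∣ (e:ℤ) * x := hge.mul_right x
    have := dvd_add h1 h2
    simpa using this
  have hgk : (g:ℤ) ∣ (k:ℤ) := hge.trans (by exact_mod_cast hek)
  have h3 : IsUnit ((g:ℤ)) := hf.isUnit_of_dvd' hgf hgk
  rw [Int.isUnit_iff] at h3
  rcases h3 with h3 | h3
  · exact hg1 (by exact_mod_cast h3)
  · omega

section Aux

lemma exists_rep (d : ℕ) (hd0 : 0 < d) (c : ℤ) :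
    ∃ r : ℕ, 1 ≤ r ∧ r ≤ d ∧ (r:ℤ) ≡ c [ZMOD (d:ℤ)] := by
  have hd0' : (0:ℤ) < d := by exact_mod_cast hd0
  have h0 : 0 ≤ c % d := Int.emod_nonneg c hd0'.ne'
  have h1 : c % d < d := Int.emod_lt_of_pos c hd0'
  have hcc : c % d ≡ c [ZMOD (d:ℤ)] := Int.emod_emod_of_dvd c dvd_rfl
  by_cases hz : c % d = 0
  · refine ⟨d, hd0, le_refl d, ?_⟩
    have hdc : (d:ℤ) ∣ c := Int.dvd_of_emod_eq_zero hz
    have : (d:ℤ) ∣ c - d := by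
      exact dvd_sub hdc dvd_rfl
    exact Int.modEq_iff_dvd.mpr this
  · refine ⟨(c % d).toNat, ?_, ?_, ?_⟩
    · omega
    · omega
    · have : ((c % d).toNat : ℤ) = c % d := Int.toNat_of_nonneg h0
      rw [this]; exact hcc

end Aux


lemma T_eval (k d e : ℕ) (hk : 0 < k) (hd0 : 0 < d) (hek : e ∣ k) (hco : Nat.Coprime e d)
    (hdk : d ∣ k / e) (m f : ℤ) (hm : IsCoprime m (k:ℤ))
    (u : ℤ) (hu : u * e ≡ 1 [ZMOD (d:ℤ)])
    (r : ℕ) (hr1 : 1 ≤ r) (hr2 : r ≤ d) (hr : (r:ℤ) ≡ u * f [ZMOD (d:ℤ)]) :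
    (∑ n ∈ Finset.Icc 1 k, if e ∣ n ∧ (n:ℤ) ≡ f [ZMOD (d:ℤ)] then Efun k (m*n) else 0)
      = if (k / e) / d = 1 then Efun k (m * e * r) else 0 := by
  classical
  have he0 : 0 < e := Nat.pos_of_dvd_of_pos hek hk
  have hM0 : 0 < k / e := Nat.div_pos (Nat.le_of_dvd hk hek) he0
  set N := (k / e) / d with hN
  have hkeN : d * N = k / e := Nat.mul_div_cancel' hdk
  have hkN : k = (e * d) * N := by
    have h3 : e * (k / e) = k := Nat.mul_div_cancel' hek
    rw [← h3, ← hkeN]; ring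
  have hN0 : 0 < N := by
    rcases Nat.eq_zero_or_pos N with h | h
    · rw [h, mul_zero] at hkN; omega
    · exact h
  have hNk : N ∣ k := ⟨e * d, by rw [hkN]; ring⟩
  have hkdivN : k / N = e * d := by rw [hkN, Nat.mul_div_cancel _ hN0]
  -- step 1: split the conjunction in the if
  have step1 : (∑ n ∈ Finset.Icc 1 k, if e ∣ n ∧ (n:ℤ) ≡ f [ZMOD (d:ℤ)] then Efun k (m*n) else 0)
      = ∑ n ∈ Finset.Icc 1 k, if e ∣ n then
          (if (n:ℤ) ≡ f [ZMOD (d:ℤ)] then Efun k (m*n) else 0) else 0 := by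
    refine Finset.sum_congr rfl fun n _ => ?_
    by_cases h1 : e ∣ n <;> by_cases h2 : (n:ℤ) ≡ f [ZMOD (d:ℤ)] <;> simp [h1, h2]
  rw [step1, sum_dvd_reindex k e hek he0]
  -- step 2: rewrite the congruence condition
  have step2 : ∀ j ∈ Finset.Icc 1 (k / e),
      (if ((e * j : ℕ):ℤ) ≡ f [ZMOD (d:ℤ)] then Efun k (m*((e*j:ℕ):ℤ)) else 0)
      = (if (j:ℤ) ≡ (r:ℤ) [ZMOD (d:ℤ)] then Efun k (m*((e*j:ℕ):ℤ)) else 0) := by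
    intro j _
    have hiff : (((e * j : ℕ):ℤ) ≡ f [ZMOD (d:ℤ)]) ↔ ((j:ℤ) ≡ (r:ℤ) [ZMOD (d:ℤ)]) := by
      have hcast : ((e * j : ℕ):ℤ) = (e:ℤ) * j := by push_cast; ring
      rw [hcast]
      constructor
      · intro h
        have h1 : u * ((e:ℤ) * j) ≡ u * f [ZMOD (d:ℤ)] := h.mul_left u
        have h2 : (u * e) * (j:ℤ) ≡ 1 * (j:ℤ) [ZMOD (d:ℤ)] := hu.mul_right j
        calc (j:ℤ) = 1 * (j:ℤ) := (one_mul _).symm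
          _ ≡ (u * e) * (j:ℤ) [ZMOD (d:ℤ)] := h2.symm
          _ = u * ((e:ℤ) * j) := by ring
          _ ≡ u * f [ZMOD (d:ℤ)] := h1
          _ ≡ (r:ℤ) [ZMOD (d:ℤ)] := hr.symm
      · intro h
        have h1 : (e:ℤ) * (j:ℤ) ≡ (e:ℤ) * r [ZMOD (d:ℤ)] := h.mul_left e
        have h2 : (e:ℤ) * (r:ℤ) ≡ (e:ℤ) * (u * f) [ZMOD (d:ℤ)] := hr.mul_left e
        have h3 : (u * e) * f ≡ 1 * f [ZMOD (d:ℤ)] := hu.mul_right f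
        calc (e:ℤ) * (j:ℤ) ≡ (e:ℤ) * r [ZMOD (d:ℤ)] := h1
          _ ≡ (e:ℤ) * (u * f) [ZMOD (d:ℤ)] := h2
          _ = (u * e) * f := by ring
          _ ≡ 1 * f [ZMOD (d:ℤ)] := h3
          _ = f := one_mul f
    exact if_congr hiff rfl rfl
  rw [Finset.sum_congr rfl step2,
    sum_mod_reindex (k / e) d hd0 hdk hM0 r hr1 hr2 (fun j => Efun k (m*((e*j:ℕ):ℤ)))]
  -- step 3: split each term
  have step3 : ∀ s ∈ Finset.range N, Efun k (m * (e * (r + d * s):ℕ))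
      = Efun k (m * e * r) * Efun N (m * s) := by
    intro s _
    have h1 : (m : ℤ) * ((e * (r + d * s) : ℕ) : ℤ) = m * e * r + ((e*d : ℕ) : ℤ) * (m * s) := by
      push_cast; ring
    rw [h1, Efun_add]
    congr 1
    rw [← hkdivN]
    exact Efun_div k N hNk hk.ne' (m * s)
  rw [show (k / e) / d = N from rfl, Finset.sum_congr rfl step3, ← Finset.mul_sum,
    Efun_geom_range N hN0 m]
  by_cases hN1 : N = 1
  · rw [if_pos hN1, if_pos (by rw [hN1]; exact one_dvd m), hN1]
    simp
  · rw [if_neg hN1, if_neg (not_dvd_of_coprime m k N hm hNk hN1), mul_zero]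


open scoped Classical in
/-- Lemma 3.3: evaluation of `G(d,f,m,χ⁰) = ∑_{n≤k,(n,k)=1,n≡f (d)} e(mn/k)`.
If `gcd(d, k/d) > 1` the sum vanishes; if `gcd(d, k/d) = 1` it equals
`μ(k/d)·e(fmt/d)` where `t·(k/d) ≡ 1 (mod d)`. -/
theorem stmt_7 (k : ℕ) (hk : 0 < k) (d : ℕ) (hd : d ∣ k) (hd0 : 0 < d)
    (m f : ℤ) (hm : IsCoprime m (k : ℤ)) (hf : IsCoprime f (k : ℤ)) :
    ((1 < Nat.gcd d (k / d) →
        (∑ n ∈ Finset.Icc 1 k,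
          if Nat.gcd n k = 1 ∧ (n : ℤ) ≡ f [ZMOD (d : ℤ)] then
            Complex.exp (2 * Real.pi * Complex.I * (m * n / k)) else 0) = 0)
      ∧ (Nat.gcd d (k / d) = 1 → ∀ t : ℤ, t * (k / d : ℕ) ≡ 1 [ZMOD (d : ℤ)] →
        (∑ n ∈ Finset.Icc 1 k,
          if Nat.gcd n k = 1 ∧ (n : ℤ) ≡ f [ZMOD (d : ℤ)] then
            Complex.exp (2 * Real.pi * Complex.I * (m * n / k)) else 0)
          = ((ArithmeticFunction.moebius (k / d) : ℤ) : ℂ) *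
              Complex.exp (2 * Real.pi * Complex.I * (f * m * t / d)))) := by
  have hq0 : 0 < k / d := Nat.div_pos (Nat.le_of_dvd hk hd) hd0
  have hqk : k / d ∣ k := Nat.div_dvd_of_dvd hd
  set q := k / d with hq
  have hsummand : ∀ n : ℕ,
      Complex.exp (2 * Real.pi * Complex.I * ((m:ℂ) * n / k)) = Efun k (m * n) := by
    intro n; unfold Efun; congr 1; push_cast; ring
  -- rewrite G as a Möbius-expanded double sum
  have hGrw : (∑ n ∈ Finset.Icc 1 k,
        if Nat.gcd n k = 1 ∧ (n : ℤ) ≡ f [ZMOD (d : ℤ)] then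
          Complex.exp (2 * Real.pi * Complex.I * (m * n / k)) else 0)
      = ∑ e ∈ k.divisors, ((ArithmeticFunction.moebius e : ℤ) : ℂ) *
          (∑ n ∈ Finset.Icc 1 k,
            if e ∣ n ∧ (n:ℤ) ≡ f [ZMOD (d:ℤ)] then Efun k (m*n) else 0) := by
    have h1 : ∀ n ∈ Finset.Icc 1 k,
        (if Nat.gcd n k = 1 ∧ (n : ℤ) ≡ f [ZMOD (d : ℤ)] then
          Complex.exp (2 * Real.pi * Complex.I * (m * n / k)) else 0)
        = ∑ e ∈ k.divisors, ((ArithmeticFunction.moebius e : ℤ) : ℂ) *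
            (if e ∣ n ∧ (n:ℤ) ≡ f [ZMOD (d:ℤ)] then Efun k (m*n) else 0) := by
      intro n hn
      have hn1 : 0 < n := (Finset.mem_Icc.mp hn).1
      have expand : (if Nat.gcd n k = 1 ∧ (n : ℤ) ≡ f [ZMOD (d : ℤ)] then
            Complex.exp (2 * Real.pi * Complex.I * (m * n / k)) else 0)
          = (if Nat.gcd n k = 1 then (1:ℂ) else 0) *
            (if (n:ℤ) ≡ f [ZMOD (d:ℤ)] then Efun k (m*n) else 0) := by
        rw [hsummand n]
        by_cases h1 : Nat.gcd n k = 1 <;> by_cases h2 : (n:ℤ) ≡ f [ZMOD (d:ℤ)] <;>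
          simp [h1, h2]
      rw [expand, moebius_indicator n k hn1 hk, Finset.sum_mul]
      refine Finset.sum_congr rfl fun e _ => ?_
      by_cases h1 : e ∣ n <;> by_cases h2 : (n:ℤ) ≡ f [ZMOD (d:ℤ)] <;> simp [h1, h2]
    rw [Finset.sum_congr rfl h1, Finset.sum_comm]
    exact Finset.sum_congr rfl fun e _ => (Finset.mul_sum _ _ _).symm
  -- vanishing when not coprime
  have claimA : ∀ e, e ∣ k → ¬ Nat.Coprime e d →
      (∑ n ∈ Finset.Icc 1 k,
        if e ∣ n ∧ (n:ℤ) ≡ f [ZMOD (d:ℤ)] then Efun k (m*n) else 0) = 0 := by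
    intro e hek hnc
    apply Finset.sum_eq_zero
    intro n hn
    rw [if_neg]
    rintro ⟨⟨x, hx⟩, hmod⟩
    apply gcond_false k d e f hf hek hk hnc (x:ℤ)
    have hc : ((n:ℕ):ℤ) = (e:ℤ) * x := by rw [hx]; push_cast; ring
    rwa [hc] at hmod
  -- vanishing for e ≠ q
  have hTzero : ∀ e ∈ k.divisors, e ≠ q →
      ((ArithmeticFunction.moebius e : ℤ) : ℂ) *
        (∑ n ∈ Finset.Icc 1 k,
          if e ∣ n ∧ (n:ℤ) ≡ f [ZMOD (d:ℤ)] then Efun k (m*n) else 0) = 0 := by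
    intro e he hne
    have hek : e ∣ k := (Nat.mem_divisors.mp he).1
    by_cases hco : Nat.Coprime e d
    · obtain ⟨u, hu⟩ := exists_inverse e d hco
      obtain ⟨r, hr1, hr2, hr3⟩ := exists_rep d hd0 (u * f)
      have hdk : d ∣ k / e := by
        have h1 : k = (k / e) * e := (Nat.div_mul_cancel hek).symm
        exact Nat.Coprime.dvd_of_dvd_mul_right hco.symm (h1 ▸ hd)
      rw [T_eval k d e hk hd0 hek hco hdk m f hm u hu r hr1 hr2 hr3]
      have hN : ¬ ((k / e) / d = 1) := by
        intro hN1
        apply hne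
        have h2 : d * ((k/e)/d) = k/e := Nat.mul_div_cancel' hdk
        rw [hN1, mul_one] at h2
        have h3 : e * (k / e) = k := Nat.mul_div_cancel' hek
        rw [← h2] at h3
        rw [hq]
        exact (Nat.div_eq_of_eq_mul_left hd0 h3.symm).symm
      rw [if_neg hN, mul_zero]
    · rw [claimA e hek hco, mul_zero]
  have hGval : (∑ n ∈ Finset.Icc 1 k,
        if Nat.gcd n k = 1 ∧ (n : ℤ) ≡ f [ZMOD (d : ℤ)] then
          Complex.exp (2 * Real.pi * Complex.I * (m * n / k)) else 0)
      = ((ArithmeticFunction.moebius q : ℤ) : ℂ) *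
          (∑ n ∈ Finset.Icc 1 k,
            if q ∣ n ∧ (n:ℤ) ≡ f [ZMOD (d:ℤ)] then Efun k (m*n) else 0) := by
    rw [hGrw]
    exact Finset.sum_eq_single_of_mem q (Nat.mem_divisors.mpr ⟨hqk, hk.ne'⟩) hTzero
  constructor
  · intro hgcd
    have hnc : ¬ Nat.Coprime q d := by
      intro h
      have := h.symm
      unfold Nat.Coprime at this
      omega
    rw [hGval, claimA q hqk hnc, mul_zero]
  · intro hgcd t ht
    have hco : Nat.Coprime q d := Nat.coprime_comm.mp hgcd
    obtain ⟨u, hu⟩ := exists_inverse q d hco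
    obtain ⟨r, hr1, hr2, hr3⟩ := exists_rep d hd0 (u * f)
    have hkq : k / q = d := Nat.div_div_self hd hk.ne'
    have hdk : d ∣ k / q := by rw [hkq]
    have hN1 : (k / q) / d = 1 := by rw [hkq, Nat.div_self hd0]
    rw [hGval, T_eval k d q hk hd0 hqk hco hdk m f hm u hu r hr1 hr2 hr3, if_pos hN1]
    congr 1
    have h2 : (m:ℤ) * q * r = ((k / d : ℕ) : ℤ) * (m * r) := by rw [← hq]; push_cast; ring
    rw [h2, Efun_div k d hd hk.ne' (m * r)]
    have hut : u ≡ t [ZMOD (d:ℤ)] := by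
      have e1 : u * (t * q) ≡ u * 1 [ZMOD (d:ℤ)] := ht.mul_left u
      have e2 : t * (u * q) ≡ t * 1 [ZMOD (d:ℤ)] := hu.mul_left t
      calc u = u * 1 := (mul_one u).symm
        _ ≡ u * (t * q) [ZMOD (d:ℤ)] := e1.symm
        _ = t * (u * q) := by ring
        _ ≡ t * 1 [ZMOD (d:ℤ)] := e2
        _ = t := mul_one t
    have h3 : (m:ℤ) * r ≡ f * m * t [ZMOD (d:ℤ)] := by
      have h4 : (m:ℤ) * r ≡ m * (u * f) [ZMOD (d:ℤ)] := hr3.mul_left m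
      have h5 : (m:ℤ) * (u * f) ≡ m * (t * f) [ZMOD (d:ℤ)] := (hut.mul_right f).mul_left m
      calc (m:ℤ) * r ≡ m * (u * f) [ZMOD (d:ℤ)] := h4
        _ ≡ m * (t * f) [ZMOD (d:ℤ)] := h5
        _ = f * m * t := by ring
    rw [Efun_congr d h3]
    unfold Efun
    congr 1
    push_cast
    ring
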